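/- Every submodular separation system S⃗ in a universe U contains a nested subset of separations that distinguishes any given finite set Π of profiles of S. -/

import Mathlib

open Classical

namespace TreeOfTanglesAux

variable {α : Type*} [Lattice α]

/-- Two separations are nested: some orientations are comparable. -/
abbrev Nest (star : α → α) (a b : α) : Prop :=
  ∃ a' ∈ ({a, star a} : Set α), ∃ b' ∈ ({b, star b} : Set α), a' ≤ b'

/-- `u` distinguishes the profiles `R` and `R'` (in one direction or the other). -/
abbrev SymDist (star : α → α) (u : α) (R R' : Set α) : Prop :=
  (u ∈ R ∧ star u ∈ R') ∨ (u ∈ R' ∧ star u ∈ R)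

/-- Profile of `S`. -/
structure IsProf (star : α → α) (S : Set α) (P : Set α) : Prop where
  sub : P ⊆ S
  orient : ∀ s ∈ S, (s ∈ P ∨ star s ∈ P) ∧ ¬(s ∈ P ∧ star s ∈ P ∧ s ≠ star s)
  cons : ∀ r s : α, s ∈ P → r ≤ s → ({r, star r} : Set α) ≠ {s, star s} → star r ∉ P
  prof : ∀ s ∈ P, ∀ t ∈ P, star (s ⊔ t) ∉ P

section Basics

variable {star : α → α} (hinv : ∀ x, star (star x) = x)
  (hanti : ∀ x y : α, x ≤ y → star y ≤ star x)

include hinv hanti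

set_option linter.unusedSectionVars false

lemma star_sup (x y : α) : star (x ⊔ y) = star x ⊓ star y := by
  apply le_antisymm
  · exact le_inf (hanti _ _ le_sup_left) (hanti _ _ le_sup_right)
  · have h1 : x ⊔ y ≤ star (star x ⊓ star y) := by
      apply sup_le
      · have := hanti _ _ (inf_le_left : star x ⊓ star y ≤ star x)
        rwa [hinv] at this
      · have := hanti _ _ (inf_le_right : star x ⊓ star y ≤ star y)
        rwa [hinv] at this
    have := hanti _ _ h1
    rwa [hinv] at this

lemma star_inf (x y : α) : star (x ⊓ y) = star x ⊔ star y := by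
  have h := star_sup hinv hanti (star x) (star y)
  rw [hinv, hinv] at h
  have h2 := congrArg star h
  rw [hinv] at h2
  exact h2.symm

omit hinv hanti in
lemma nest_of_le {a b x y : α} (hx : x = a ∨ x = star a) (hy : y = b ∨ y = star b)
    (hxy : x ≤ y) : Nest star a b := by
  refine ⟨x, ?_, y, ?_, hxy⟩ <;> simp only [Set.mem_insert_iff, Set.mem_singleton_iff] <;> tauto

omit hinv hanti in
lemma nest_refl (a : α) : Nest star a a :=
  ⟨a, by simp, a, by simp, le_rfl⟩

lemma nest_symm {a b : α} (h : Nest star a b) : Nest star b a := by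
  obtain ⟨x, hx, y, hy, hxy⟩ := h
  simp only [Set.mem_insert_iff, Set.mem_singleton_iff] at hx hy
  refine nest_of_le ?_ ?_ (hanti _ _ hxy)
  · rcases hy with rfl | rfl
    · exact Or.inr rfl
    · exact Or.inl (hinv b)
  · rcases hx with rfl | rfl
    · exact Or.inr rfl
    · exact Or.inl (hinv a)

lemma nest_elim {a b a' b' : α} (h : Nest star a b) (ha' : a' = a ∨ a' = star a)
    (hb' : b' = b ∨ b' = star b) :
    a' ≤ b' ∨ a' ≤ star b' ∨ b' ≤ a' ∨ star b' ≤ a' := by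
  obtain ⟨x, hx, y, hy, hxy⟩ := h
  simp only [Set.mem_insert_iff, Set.mem_singleton_iff] at hx hy
  have hx' : x = a' ∨ x = star a' := by
    rcases ha' with rfl | rfl
    · exact hx
    · rcases hx with rfl | rfl
      · exact Or.inr (by rw [hinv])
      · exact Or.inl rfl
  have hy' : y = b' ∨ y = star b' := by
    rcases hb' with rfl | rfl
    · exact hy
    · rcases hy with rfl | rfl
      · exact Or.inr (by rw [hinv])
      · exact Or.inl rfl
  rcases hx' with rfl | h1 <;> rcases hy' with rfl | h2
  · exact Or.inl hxy
  · exact Or.inr (Or.inl (h2 ▸ hxy))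
  · subst h1
    have := hanti _ _ hxy
    rw [hinv] at this
    exact Or.inr (Or.inr (Or.inr this))
  · subst h1; subst h2
    have := hanti _ _ hxy
    rw [hinv, hinv] at this
    exact Or.inr (Or.inr (Or.inl this))

omit hinv hanti in
lemma pair_ne {r x : α} (h1 : r ≠ x) (h2 : r ≠ star x) :
    ({r, star r} : Set α) ≠ {x, star x} := by
  intro h
  have : r ∈ ({x, star x} : Set α) := h ▸ (by simp : r ∈ ({r, star r} : Set α))
  simp only [Set.mem_insert_iff, Set.mem_singleton_iff] at this
  tauto

variable {S : Set α}

omit hinv hanti in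
lemma cons' {P : Set α} (hP : IsProf star S P) {x r : α} (hx : x ∈ P) (hr : r ≤ x)
    (h1 : r ≠ x) (h2 : r ≠ star x) : star r ∉ P :=
  hP.cons r x hx hr (pair_ne h1 h2)

omit hinv hanti in
lemma mem_sup {P : Set α} (hP : IsProf star S P) {a b : α} (ha : a ∈ P) (hb : b ∈ P)
    (hS : a ⊔ b ∈ S) : a ⊔ b ∈ P :=
  ((hP.orient _ hS).1).resolve_right (hP.prof a ha b hb)

omit hinv hanti in
lemma opp_sup {P : Set α} (hP : IsProf star S P) {a b : α} (ha : star a ∈ P) (hS : a ⊔ b ∈ S)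
    (h1 : a ≠ a ⊔ b) (h2 : a ≠ star (a ⊔ b)) : star (a ⊔ b) ∈ P := by
  rcases (hP.orient _ hS).1 with h | h
  · exact absurd ha (cons' hP h le_sup_left h1 h2)
  · exact h

omit hinv hanti in
lemma not_in_of_star_in {P : Set α} (hP : IsProf star S P) {c : α} (hc : c ∈ S)
    (h1 : star c ∈ P) (hne : c ≠ star c) : c ∉ P :=
  fun h => (hP.orient c hc).2 ⟨h, h1, hne⟩

/-- Fish lemma: anything nested with both crossing separations `s` and `t` is nested
with any corner `σ ⊔ τ`. -/
lemma fish {s t u σ τ : α} (hst : ¬ Nest star s t) (hσ : σ = s ∨ σ = star s)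
    (hτ : τ = t ∨ τ = star t) (hus : Nest star u s) (hut : Nest star u t) :
    Nest star u (σ ⊔ τ) := by
  have hflip : ∀ {x y : α}, x ≤ star y → y ≤ star x := fun {x y} h => by
    have := hanti _ _ h; rwa [hinv] at this
  have hσ' : star σ = s ∨ star σ = star s := by
    rcases hσ with rfl | rfl
    · exact Or.inr rfl
    · exact Or.inl (by rw [hinv])
  have hτ' : star τ = t ∨ star τ = star t := by
    rcases hτ with rfl | rfl
    · exact Or.inr rfl
    · exact Or.inl (by rw [hinv])
  have Hs := nest_elim hinv hanti hus (Or.inl rfl) hσ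
  have Ht := nest_elim hinv hanti hut (Or.inl rfl) hτ
  -- Hs : u ≤ σ ∨ u ≤ star σ ∨ σ ≤ u ∨ star σ ≤ u
  rcases Hs with g | g | g | g
  · exact nest_of_le (Or.inl rfl) (Or.inl rfl) (g.trans le_sup_left)
  · -- u ≤ star σ, i.e. σ ≤ star u
    have gσ : σ ≤ star u := hflip g
    rcases Ht with h | h | h | h
    · exact nest_of_le (Or.inl rfl) (Or.inl rfl) (h.trans le_sup_right)
    · -- τ ≤ star u as well
      have hτu : τ ≤ star u := hflip h
      have hle : u ≤ star (σ ⊔ τ) := by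
        have := hanti _ _ (sup_le gσ hτu); rwa [hinv] at this
      exact nest_of_le (Or.inl rfl) (Or.inr rfl) hle
    · -- τ ≤ u : then τ ≤ u ≤ star σ, comparability between orientations of t and s
      exact absurd (nest_of_le hτ hσ' (h.trans g)) (fun hts => hst (nest_symm hinv hanti hts))
    · -- star τ ≤ u : star u ≤ τ, done
      have : star u ≤ τ := by have := hanti _ _ h; rwa [hinv] at this
      exact nest_of_le (Or.inr rfl) (Or.inl rfl) (this.trans le_sup_right)
  · -- σ ≤ u
    rcases Ht with h | h | h | h
    · exact nest_of_le (Or.inl rfl) (Or.inl rfl) (h.trans le_sup_right)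
    · -- u ≤ star τ : σ ≤ u ≤ star τ
      exact absurd (nest_of_le hσ hτ' (g.trans h)) hst
    · exact nest_of_le (Or.inr rfl) (Or.inr rfl) (hanti _ _ (sup_le g h))
    · have : star u ≤ τ := by have := hanti _ _ h; rwa [hinv] at this
      exact nest_of_le (Or.inr rfl) (Or.inl rfl) (this.trans le_sup_right)
  · -- star σ ≤ u : star u ≤ σ
    have : star u ≤ σ := by have := hanti _ _ g; rwa [hinv] at this
    exact nest_of_le (Or.inr rfl) (Or.inl rfl) (this.trans le_sup_left)

end Basics



open Classical in
noncomputable def crossers (star : α → α) (s : α) (N : Finset α) : Finset α :=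
  N.filter (fun u => ¬ Nest star s u)

lemma mem_crossers {star : α → α} {s u : α} {N : Finset α} :
    u ∈ crossers star s N ↔ u ∈ N ∧ ¬ Nest star s u := Finset.mem_filter

open Classical in
noncomputable def ori (star : α → α) (P : Set α) (u : α) : α :=
  if u ∈ P then u else star u

open Classical in
noncomputable def badPairs (star : α → α) (PF : Finset (Set α)) (N : Finset α) :
    Finset (Set α × Set α) :=
  (PF ×ˢ PF).filter (fun pq => pq.1 ≠ pq.2 ∧ ¬ ∃ u ∈ N, SymDist star u pq.1 pq.2)

lemma mem_badPairs {star : α → α} {PF : Finset (Set α)} {N : Finset α}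
    {pq : Set α × Set α} : pq ∈ badPairs star PF N ↔
    pq.1 ∈ PF ∧ pq.2 ∈ PF ∧ pq.1 ≠ pq.2 ∧ ¬ ∃ u ∈ N, SymDist star u pq.1 pq.2 := by
  unfold badPairs
  rw [Finset.mem_filter, Finset.mem_product]
  tauto

section Main

variable {star : α → α} (hinv : ∀ x, star (star x) = x)
  (hanti : ∀ x y : α, x ≤ y → star y ≤ star x)
  {S : Set α} (hSstar : ∀ s ∈ S, star s ∈ S)
  (hsub : ∀ s ∈ S, ∀ t ∈ S, s ⊔ t ∈ S ∨ s ⊓ t ∈ S)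

include hinv hanti hSstar hsub

set_option linter.unusedSectionVars false
set_option maxHeartbeats 1000000

lemma insert_lemma (Profs : Set (Set α)) (hPall : ∀ R ∈ Profs, IsProf star S R) :
    ∀ (n : ℕ) (P Q : Set α), IsProf star S P → IsProf star S Q →
    ∀ (N : Finset α) (s : α),
      (crossers star s N).card ≤ n →
      ↑N ⊆ S →
      (∀ u ∈ N, ∀ v ∈ N, Nest star u v) →
      (∀ u ∈ N, ¬(u ∈ P ∧ star u ∈ Q) ∧ ¬(u ∈ Q ∧ star u ∈ P)) →
      s ∈ S → s ∈ P → star s ∈ Q →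
      ∃ N' : Finset α, ↑N' ⊆ S ∧ (∀ u ∈ N', ∀ v ∈ N', Nest star u v) ∧
        (∀ R ∈ Profs, ∀ R' ∈ Profs,
          (∃ u ∈ N, SymDist star u R R') → ∃ u ∈ N', SymDist star u R R') ∧
        (∃ u ∈ N', SymDist star u P Q) := by
  intro n
  induction n with
  | zero =>
    intro P Q hP hQ N s hcard hNS hNest hU hsS hsP hsQ
    have hempty : crossers star s N = ∅ := Finset.card_eq_zero.mp (Nat.le_zero.mp hcard)
    have hall : ∀ u ∈ N, Nest star s u := by
      intro u hu
      by_contra h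
      exact Finset.eq_empty_iff_forall_notMem.mp hempty u (mem_crossers.mpr ⟨hu, h⟩)
    refine ⟨insert s N, ?_, ?_, ?_, ⟨s, Finset.mem_insert_self s N, Or.inl ⟨hsP, hsQ⟩⟩⟩
    · rw [Finset.coe_insert]
      exact Set.insert_subset hsS hNS
    · intro u hu v hv
      rcases Finset.mem_insert.mp hu with rfl | hu' <;>
        rcases Finset.mem_insert.mp hv with rfl | hv'
      · exact nest_refl _
      · exact hall v hv'
      · exact nest_symm hinv hanti (hall u hu')
      · exact hNest u hu' v hv'
    · intro R _ R' _ hex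
      obtain ⟨u, hu, hd⟩ := hex
      exact ⟨u, Finset.mem_insert_of_mem hu, hd⟩
  | succ n IH =>
    intro P Q hP hQ N s hcard hNS hNest hU hsS hsP hsQ
    by_cases hsmall : (crossers star s N).card ≤ n
    · exact IH P Q hP hQ N s hsmall hNS hNest hU hsS hsP hsQ
    have hnon : (crossers star s N).Nonempty := by
      rw [← Finset.card_pos]; omega
    have hor : ∀ u ∈ N, (ori star P u = u ∨ ori star P u = star u) ∧
        ori star P u ∈ P ∧ ori star P u ∈ Q := by
      intro u hu
      have huS : u ∈ S := hNS hu
      obtain ⟨hU1, hU2⟩ := hU u hu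
      by_cases h : u ∈ P
      · have huQ : u ∈ Q := by
          rcases (hQ.orient u huS).1 with h' | h'
          · exact h'
          · exact absurd ⟨h, h'⟩ hU1
        unfold ori
        rw [if_pos h]
        exact ⟨Or.inl rfl, h, huQ⟩
      · have hsuP : star u ∈ P := ((hP.orient u huS).1).resolve_left h
        have hsuQ : star u ∈ Q := by
          rcases (hQ.orient u huS).1 with h' | h'
          · exact absurd ⟨h', hsuP⟩ hU2
          · exact h'
        unfold ori
        rw [if_neg h]
        exact ⟨Or.inr rfl, hsuP, hsuQ⟩
    obtain ⟨τ, hτmem, hmin⟩ := Finset.exists_minimal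
      (hnon.image (ori star P))
    obtain ⟨t, htc, hto⟩ := Finset.mem_image.mp hτmem
    obtain ⟨htN, hts⟩ := mem_crossers.mp htc
    have hτfacts := hor t htN
    rw [hto] at hτfacts
    obtain ⟨hτor, hτP, hτQ⟩ := hτfacts
    have hτS : τ ∈ S := by
      rcases hτor with h | h
      · rw [h]; exact hNS htN
      · rw [h]; exact hSstar t (hNS htN)
    have hcmp1 : ∀ x y : α, (x = s ∨ x = star s) → (y = t ∨ y = star t) → ¬ x ≤ y :=
      fun x y hx hy hle => hts (nest_of_le hx hy hle)
    have hcmp2 : ∀ y x : α, (y = t ∨ y = star t) → (x = s ∨ x = star s) → ¬ y ≤ x :=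
      fun y x hy hx hle => hts (nest_symm hinv hanti (nest_of_le hy hx hle))
    have hστ : star τ = t ∨ star τ = star t := by
      rcases hτor with h | h
      · right; rw [h]
      · left; rw [h, hinv]
    by_cases h1 : s ⊔ τ ∈ S
    · -- good corner on the P side
      have hgP : s ⊔ τ ∈ P := mem_sup hP hsP hτP h1
      have hne1 : s ≠ s ⊔ τ := by
        intro e
        exact hcmp2 τ s hτor (Or.inl rfl) (by rw [e]; exact le_sup_right)
      have hne2 : s ≠ star (s ⊔ τ) := by
        intro e
        have e2 : star s = s ⊔ τ := by
          have h3 := congrArg star e; rwa [hinv] at h3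
        exact hcmp2 τ (star s) hτor (Or.inr rfl) (by rw [e2]; exact le_sup_right)
      have hgQ : star (s ⊔ τ) ∈ Q := opp_sup hQ hsQ h1 hne1 hne2
      have hsubset : crossers star (s ⊔ τ) N ⊆ (crossers star s N).erase t := by
        intro u hu
        obtain ⟨huN, hug⟩ := mem_crossers.mp hu
        rw [Finset.mem_erase, mem_crossers]
        constructor
        · rintro rfl
          exact hug (nest_symm hinv hanti (nest_of_le hτor (Or.inl rfl) le_sup_right))
        · refine ⟨huN, fun hNsu => hug ?_⟩
          exact nest_symm hinv hanti
            (fish hinv hanti hts (Or.inl rfl) hτor (nest_symm hinv hanti hNsu)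
              (hNest u huN t htN))
      have hcard' : (crossers star (s ⊔ τ) N).card ≤ n := by
        have h1' := Finset.card_le_card hsubset
        have h2' := Finset.card_erase_lt_of_mem htc
        omega
      exact IH P Q hP hQ N (s ⊔ τ) hcard' hNS hNest hU h1 hgP hgQ
    · by_cases h2 : star s ⊔ τ ∈ S
      · -- good corner on the Q side
        have hgQ' : star s ⊔ τ ∈ Q := mem_sup hQ hsQ hτQ h2
        have hne1 : star s ≠ star s ⊔ τ := by
          intro e
          exact hcmp2 τ (star s) hτor (Or.inr rfl) (by rw [e]; exact le_sup_right)
        have hne2 : star s ≠ star (star s ⊔ τ) := by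
          intro e
          have e2 : s = star s ⊔ τ := by
            have h3 := congrArg star e; rwa [hinv, hinv] at h3
          exact hcmp2 τ s hτor (Or.inl rfl) (by rw [e2]; exact le_sup_right)
        have hgP' : star (star s ⊔ τ) ∈ P := by
          refine opp_sup hP ?_ h2 hne1 hne2
          rw [hinv]; exact hsP
        have hsubset : crossers star (star s ⊔ τ) N ⊆ (crossers star s N).erase t := by
          intro u hu
          obtain ⟨huN, hug⟩ := mem_crossers.mp hu
          rw [Finset.mem_erase, mem_crossers]
          constructor
          · rintro rfl
            exact hug (nest_symm hinv hanti (nest_of_le hτor (Or.inl rfl) le_sup_right))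
          · refine ⟨huN, fun hNsu => hug ?_⟩
            exact nest_symm hinv hanti
              (fish hinv hanti hts (Or.inr rfl) hτor (nest_symm hinv hanti hNsu)
                (hNest u huN t htN))
        have hcard' : (crossers star (star s ⊔ τ) N).card ≤ n := by
          have h1' := Finset.card_le_card hsubset
          have h2' := Finset.card_erase_lt_of_mem htc
          omega
        obtain ⟨N', hS', hnest', hpres', hnew'⟩ :=
          IH Q P hQ hP N (star s ⊔ τ) hcard' hNS hNest
            (fun u hu => ⟨(hU u hu).2, (hU u hu).1⟩) h2 hgQ' hgP'
        obtain ⟨u, hu, hd⟩ := hnew'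
        exact ⟨N', hS', hnest', hpres', ⟨u, hu, hd.symm⟩⟩
      · -- surgery branch: no good corner exists
        have hw1 : star s ⊓ τ ∈ S := (hsub (star s) (hSstar s hsS) τ hτS).resolve_left h2
        have hw2 : s ⊓ τ ∈ S := (hsub s hsS τ hτS).resolve_left h1
        have hc1S : s ⊔ star τ ∈ S := by
          have he : star (star s ⊓ τ) = s ⊔ star τ := by
            rw [star_inf hinv hanti, hinv]
          rw [← he]; exact hSstar _ hw1
        have hc2S : star s ⊔ star τ ∈ S := by
          have he : star (s ⊓ τ) = star s ⊔ star τ := star_inf hinv hanti s τ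
          rw [← he]; exact hSstar _ hw2
        have hstarc1 : star (s ⊔ star τ) = star s ⊓ τ := by
          rw [star_sup hinv hanti, hinv]
        have hstarc2 : star (star s ⊔ star τ) = s ⊓ τ := by
          rw [star_sup hinv hanti, hinv, hinv]
        have hne1a : star τ ≠ s ⊔ star τ := by
          intro e
          exact hcmp1 s (star τ) (Or.inl rfl) hστ (by rw [e]; exact le_sup_left)
        have hne1b : star τ ≠ star (s ⊔ star τ) := by
          intro e
          have e2 : τ = s ⊔ star τ := by
            have h3 := congrArg star e; rwa [hinv, hinv] at h3
          exact hcmp1 s τ (Or.inl rfl) hτor (by rw [e2]; exact le_sup_left)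
        have hne2a : star τ ≠ star s ⊔ star τ := by
          intro e
          exact hcmp1 (star s) (star τ) (Or.inr rfl) hστ (by rw [e]; exact le_sup_left)
        have hne2b : star τ ≠ star (star s ⊔ star τ) := by
          intro e
          have e2 : τ = star s ⊔ star τ := by
            have h3 := congrArg star e; rwa [hinv, hinv] at h3
          exact hcmp1 (star s) τ (Or.inr rfl) hτor (by rw [e2]; exact le_sup_left)
        have hforce1 : ∀ p : Set α, IsProf star S p → τ ∈ p → star (s ⊔ star τ) ∈ p := by
          intro p hp hτp
          rcases (hp.orient _ hc1S).1 with h | h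
          · exfalso
            have hcc := cons' hp h (le_sup_right : star τ ≤ s ⊔ star τ) hne1a hne1b
            rw [hinv] at hcc
            exact hcc hτp
          · exact h
        have hforce2 : ∀ p : Set α, IsProf star S p → τ ∈ p →
            star (star s ⊔ star τ) ∈ p := by
          intro p hp hτp
          rcases (hp.orient _ hc2S).1 with h | h
          · exfalso
            have hcc := cons' hp h (le_sup_right : star τ ≤ star s ⊔ star τ) hne2a hne2b
            rw [hinv] at hcc
            exact hcc hτp
          · exact h
        have hc1ne : s ⊔ star τ ≠ star (s ⊔ star τ) := by
          intro e
          have h' : s ≤ star s ⊓ τ := by rw [← hstarc1, ← e]; exact le_sup_left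
          exact hcmp1 s τ (Or.inl rfl) hτor (h'.trans inf_le_right)
        have hc2ne : star s ⊔ star τ ≠ star (star s ⊔ star τ) := by
          intro e
          have h' : star s ≤ s ⊓ τ := by rw [← hstarc2, ← e]; exact le_sup_left
          exact hcmp1 (star s) τ (Or.inr rfl) hτor (h'.trans inf_le_right)
        have hflip : ∀ {x y : α}, x ≤ star y → y ≤ star x := fun {x y} h => by
          have h3 := hanti _ _ h; rwa [hinv] at h3
        have hbig : ∀ u ∈ N.erase t,
            Nest star u (s ⊔ star τ) ∧ Nest star u (star s ⊔ star τ) := by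
          intro u hu
          obtain ⟨hut, huN⟩ := Finset.mem_erase.mp hu
          obtain ⟨horu, hvP, hvQ⟩ := hor u huN
          have hsor : star (ori star P u) = u ∨ star (ori star P u) = star u := by
            rcases horu with h | h
            · right; rw [h]
            · left; rw [h, hinv]
          by_cases hem1 : ori star P u = τ
          · constructor <;>
              exact nest_of_le hsor (Or.inl rfl) (by rw [hem1]; exact le_sup_right)
          by_cases hem2 : ori star P u = star τ
          · constructor <;>
              exact nest_of_le horu (Or.inl rfl) (by rw [hem2]; exact le_sup_right)
          have H := nest_elim hinv hanti (hNest u huN t htN) horu hτor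
          rcases H with h | h | h | h
          · -- ori u ≤ τ, ori u ≠ τ
            by_cases hNus : Nest star u s
            · have Hs := nest_elim hinv hanti hNus horu (Or.inl rfl)
              rcases Hs with g | g | g | g
              · constructor
                · exact nest_of_le horu (Or.inl rfl) (g.trans le_sup_left)
                · have hle : star s ⊔ star τ ≤ star (ori star P u) :=
                    sup_le (hanti _ _ g) (hanti _ _ h)
                  exact nest_of_le horu (Or.inr rfl) (hflip hle)
              · constructor
                · have hle : s ⊔ star τ ≤ star (ori star P u) :=
                    sup_le (hflip g) (hanti _ _ h)
                  exact nest_of_le horu (Or.inr rfl) (hflip hle)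
                · exact nest_of_le horu (Or.inl rfl) (g.trans le_sup_left)
              · exact absurd (g.trans h) (hcmp1 s τ (Or.inl rfl) hτor)
              · exact absurd (g.trans h) (hcmp1 (star s) τ (Or.inr rfl) hτor)
            · have huc : u ∈ crossers star s N :=
                mem_crossers.mpr ⟨huN, fun hsu => hNus (nest_symm hinv hanti hsu)⟩
              have himg : ori star P u ∈ (crossers star s N).image (ori star P) :=
                Finset.mem_image_of_mem (ori star P) huc
              exact absurd (le_antisymm h (hmin himg h)) hem1
          · constructor <;> exact nest_of_le horu (Or.inl rfl) (h.trans le_sup_right)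
          · have h' : star (ori star P u) ≤ star τ := hanti _ _ h
            constructor <;> exact nest_of_le hsor (Or.inl rfl) (h'.trans le_sup_right)
          · exfalso
            have h' : star (ori star P u) ≤ τ := by
              have h3 := hanti _ _ h; rwa [hinv] at h3
            have hne1 : star (ori star P u) ≠ τ := by
              intro e
              exact hem2 (by rw [← e, hinv])
            have hne2 : star (ori star P u) ≠ star τ := by
              intro e
              have h3 := congrArg star e; rw [hinv, hinv] at h3
              exact hem1 h3
            have hcc := cons' hP hτP h' hne1 hne2
            rw [hinv] at hcc
            exact hcc hvP
        have h12 : Nest star (s ⊔ star τ) (star s ⊔ star τ) :=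
          nest_of_le (Or.inr rfl) (Or.inl rfl)
            (by rw [hstarc1]; exact inf_le_left.trans le_sup_left)
        have hc1s : Nest star s (s ⊔ star τ) :=
          nest_symm hinv hanti
            (nest_of_le (Or.inr rfl) (Or.inr rfl) (by rw [hstarc1]; exact inf_le_left))
        have hc2s : Nest star s (star s ⊔ star τ) :=
          nest_symm hinv hanti
            (nest_of_le (Or.inr rfl) (Or.inl rfl) (by rw [hstarc2]; exact inf_le_left))
        have hN'mem : ∀ x, x ∈ insert (s ⊔ star τ) (insert (star s ⊔ star τ) (N.erase t)) ↔
            (x = s ⊔ star τ ∨ x = star s ⊔ star τ ∨ (x ≠ t ∧ x ∈ N)) := by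
          intro x
          simp [Finset.mem_insert, Finset.mem_erase]
        have hN'S : ↑(insert (s ⊔ star τ) (insert (star s ⊔ star τ) (N.erase t))) ⊆ S := by
          intro x hx
          rw [Finset.mem_coe, hN'mem] at hx
          rcases hx with rfl | rfl | ⟨_, hx⟩
          · exact hc1S
          · exact hc2S
          · exact hNS hx
        have hN'nest : ∀ u ∈ insert (s ⊔ star τ) (insert (star s ⊔ star τ) (N.erase t)),
            ∀ v ∈ insert (s ⊔ star τ) (insert (star s ⊔ star τ) (N.erase t)),
            Nest star u v := by
          intro u hu v hv
          rw [hN'mem] at hu hv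
          rcases hu with rfl | rfl | hu <;> rcases hv with rfl | rfl | hv
          · exact nest_refl _
          · exact h12
          · exact nest_symm hinv hanti (hbig v (Finset.mem_erase.mpr hv)).1
          · exact nest_symm hinv hanti h12
          · exact nest_refl _
          · exact nest_symm hinv hanti (hbig v (Finset.mem_erase.mpr hv)).2
          · exact (hbig u (Finset.mem_erase.mpr hu)).1
          · exact (hbig u (Finset.mem_erase.mpr hu)).2
          · exact hNest u hu.2 v hv.2
        have hU' : ∀ u ∈ insert (s ⊔ star τ) (insert (star s ⊔ star τ) (N.erase t)),
            ¬(u ∈ P ∧ star u ∈ Q) ∧ ¬(u ∈ Q ∧ star u ∈ P) := by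
          intro u hu
          rw [hN'mem] at hu
          rcases hu with rfl | rfl | hu
          · exact ⟨fun hh => not_in_of_star_in hP hc1S (hforce1 P hP hτP) hc1ne hh.1,
              fun hh => not_in_of_star_in hQ hc1S (hforce1 Q hQ hτQ) hc1ne hh.1⟩
          · exact ⟨fun hh => not_in_of_star_in hP hc2S (hforce2 P hP hτP) hc2ne hh.1,
              fun hh => not_in_of_star_in hQ hc2S (hforce2 Q hQ hτQ) hc2ne hh.1⟩
          · exact hU u hu.2
        have hsubset : crossers star s (insert (s ⊔ star τ)
            (insert (star s ⊔ star τ) (N.erase t))) ⊆ (crossers star s N).erase t := by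
          intro u hu
          obtain ⟨huN', hcross⟩ := mem_crossers.mp hu
          rw [hN'mem] at huN'
          rcases huN' with rfl | rfl | hu'
          · exact absurd hc1s hcross
          · exact absurd hc2s hcross
          · exact Finset.mem_erase.mpr ⟨hu'.1, mem_crossers.mpr ⟨hu'.2, hcross⟩⟩
        have hcard' : (crossers star s (insert (s ⊔ star τ)
            (insert (star s ⊔ star τ) (N.erase t)))).card ≤ n := by
          have h1' := Finset.card_le_card hsubset
          have h2' := Finset.card_erase_lt_of_mem htc
          omega
        obtain ⟨N'', hS'', hnest'', hpres'', hnew''⟩ :=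
          IH P Q hP hQ (insert (s ⊔ star τ) (insert (star s ⊔ star τ) (N.erase t))) s
            hcard' hN'S hN'nest hU' hsS hsP hsQ
        refine ⟨N'', hS'', hnest'', ?_, hnew''⟩
        intro R hR R' hR' hex
        apply hpres'' R hR R' hR'
        obtain ⟨u, huN, hud⟩ := hex
        by_cases hut : u = t
        · subst hut
          obtain ⟨R₁, R₂, hR₁p, hR₂p, hτR₁, hsτR₂, hback⟩ :
              ∃ R₁ R₂ : Set α, IsProf star S R₁ ∧ IsProf star S R₂ ∧ τ ∈ R₁ ∧
                star τ ∈ R₂ ∧ (∀ c : α, SymDist star c R₁ R₂ → SymDist star c R R') := by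
            rcases hud with ⟨hA, hB⟩ | ⟨hA, hB⟩ <;> rcases hτor with h | h
            · exact ⟨R, R', hPall R hR, hPall R' hR', (by rw [h]; exact hA),
                (by rw [h]; exact hB), fun c hc => hc⟩
            · exact ⟨R', R, hPall R' hR', hPall R hR, (by rw [h]; exact hB),
                (by rw [h, hinv]; exact hA), fun c hc => hc.symm⟩
            · exact ⟨R', R, hPall R' hR', hPall R hR, (by rw [h]; exact hA),
                (by rw [h]; exact hB), fun c hc => hc.symm⟩
            · exact ⟨R, R', hPall R hR, hPall R' hR', (by rw [h]; exact hB),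
                (by rw [h, hinv]; exact hA), fun c hc => hc⟩
          rcases (hR₂p.orient s hsS).1 with hs2 | hs2
          · refine ⟨s ⊔ star τ, ?_, hback _ (Or.inr
              ⟨mem_sup hR₂p hs2 hsτR₂ hc1S, hforce1 R₁ hR₁p hτR₁⟩)⟩
            rw [hN'mem]; exact Or.inl rfl
          · refine ⟨star s ⊔ star τ, ?_, hback _ (Or.inr
              ⟨mem_sup hR₂p hs2 hsτR₂ hc2S, hforce2 R₁ hR₁p hτR₁⟩)⟩
            rw [hN'mem]; exact Or.inr (Or.inl rfl)
        · refine ⟨u, ?_, hud⟩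
          rw [hN'mem]; exact Or.inr (Or.inr ⟨hut, huN⟩)

lemma build (Profs : Set (Set α)) (hfin : Profs.Finite)
    (hPall : ∀ R ∈ Profs, IsProf star S R) :
    ∀ (k : ℕ) (N : Finset α), ↑N ⊆ S → (∀ u ∈ N, ∀ v ∈ N, Nest star u v) →
      (badPairs star hfin.toFinset N).card ≤ k →
      ∃ N' : Finset α, ↑N' ⊆ S ∧ (∀ u ∈ N', ∀ v ∈ N', Nest star u v) ∧
        ∀ P ∈ Profs, ∀ Q ∈ Profs, P ≠ Q → ∃ u ∈ N', SymDist star u P Q := by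
  intro k
  induction k with
  | zero =>
    intro N hNS hNest hcard
    refine ⟨N, hNS, hNest, ?_⟩
    intro P hP Q hQ hne
    by_contra h
    have hmem : (P, Q) ∈ badPairs star hfin.toFinset N :=
      mem_badPairs.mpr ⟨hfin.mem_toFinset.mpr hP, hfin.mem_toFinset.mpr hQ, hne, h⟩
    have hempty : badPairs star hfin.toFinset N = ∅ :=
      Finset.card_eq_zero.mp (Nat.le_zero.mp hcard)
    rw [hempty] at hmem
    exact absurd hmem (Finset.notMem_empty _)
  | succ k IHk =>
    intro N hNS hNest hcard
    by_cases hsmall : (badPairs star hfin.toFinset N).card ≤ k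
    · exact IHk N hNS hNest hsmall
    have hne : (badPairs star hfin.toFinset N).Nonempty := by
      rw [← Finset.card_pos]; omega
    obtain ⟨⟨P, Q⟩, hmem⟩ := hne
    obtain ⟨hPf, hQf, hPQ, hundist⟩ := mem_badPairs.mp hmem
    have hPm : P ∈ Profs := hfin.mem_toFinset.mp hPf
    have hQm : Q ∈ Profs := hfin.mem_toFinset.mp hQf
    have hP := hPall P hPm
    have hQ := hPall Q hQm
    have hU : ∀ u ∈ N, ¬(u ∈ P ∧ star u ∈ Q) ∧ ¬(u ∈ Q ∧ star u ∈ P) := by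
      intro u hu
      constructor <;> intro hh
      · exact hundist ⟨u, hu, Or.inl hh⟩
      · exact hundist ⟨u, hu, Or.inr hh⟩
    have hx : ∃ x, (x ∈ P ∧ x ∉ Q) ∨ (x ∈ Q ∧ x ∉ P) := by
      by_contra h
      push_neg at h
      apply hPQ
      ext x
      have hh := h x
      tauto
    obtain ⟨x, hx⟩ := hx
    have hres : ∃ N' : Finset α, ↑N' ⊆ S ∧ (∀ u ∈ N', ∀ v ∈ N', Nest star u v) ∧
        (∀ R ∈ Profs, ∀ R' ∈ Profs,
          (∃ u ∈ N, SymDist star u R R') → ∃ u ∈ N', SymDist star u R R') ∧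
        (∃ u ∈ N', SymDist star u P Q) := by
      rcases hx with ⟨hxP, hxQ⟩ | ⟨hxQ, hxP⟩
      · have hxS : x ∈ S := hP.sub hxP
        have hsxQ : star x ∈ Q := ((hQ.orient x hxS).1).resolve_left hxQ
        exact insert_lemma hinv hanti hSstar hsub Profs hPall
          (crossers star x N).card P Q hP hQ N x le_rfl hNS hNest hU hxS hxP hsxQ
      · have hxS : x ∈ S := hQ.sub hxQ
        have hsxP : star x ∈ P := ((hP.orient x hxS).1).resolve_left hxP
        obtain ⟨N', a, b, c, d⟩ := insert_lemma hinv hanti hSstar hsub Profs hPall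
          (crossers star x N).card Q P hQ hP N x le_rfl hNS hNest
          (fun u hu => ⟨(hU u hu).2, (hU u hu).1⟩) hxS hxQ hsxP
        obtain ⟨u, hu, hd⟩ := d
        exact ⟨N', a, b, c, ⟨u, hu, hd.symm⟩⟩
    obtain ⟨N', hS', hnest', hpres', hnew'⟩ := hres
    have hsubset : badPairs star hfin.toFinset N' ⊆
        (badPairs star hfin.toFinset N).erase (P, Q) := by
      intro pq hpq
      obtain ⟨h1', h2', h3', h4'⟩ := mem_badPairs.mp hpq
      rw [Finset.mem_erase]
      constructor
      · intro e
        rw [e] at h4'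
        exact h4' hnew'
      · exact mem_badPairs.mpr ⟨h1', h2', h3', fun hex => h4'
          (hpres' _ (hfin.mem_toFinset.mp h1') _ (hfin.mem_toFinset.mp h2') hex)⟩
    have hcard' : (badPairs star hfin.toFinset N').card ≤ k := by
      have h1' := Finset.card_le_card hsubset
      have h2' := Finset.card_erase_lt_of_mem hmem
      omega
    exact IHk N' hS' hnest' hcard'

end Main

end TreeOfTanglesAux

/-- Theorem 3.1: every submodular separation system `S` contains a nested set of
separations distinguishing any given finite set of profiles of `S`. -/
theorem tree_of_tangles_profiles {α : Type*} [Lattice α] (star : α → α)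
    (hinv : ∀ x, star (star x) = x) (hanti : ∀ x y : α, x ≤ y → star y ≤ star x)
    (S : Set α) (hSstar : ∀ s ∈ S, star s ∈ S)
    -- `S` is submodular:
    (hsub : ∀ s ∈ S, ∀ t ∈ S, s ⊔ t ∈ S ∨ s ⊓ t ∈ S)
    (Profs : Set (Set α)) (hfin : Profs.Finite)
    -- each member of `Profs` is a profile of `S`: a consistent orientation of `S`
    -- avoiding all sets `{s, t, star (s ⊔ t)}`:
    (hprof : ∀ P ∈ Profs, P ⊆ S ∧
        (∀ s ∈ S, (s ∈ P ∨ star s ∈ P) ∧ ¬(s ∈ P ∧ star s ∈ P ∧ s ≠ star s)) ∧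
        (∀ r s : α, s ∈ P → r ≤ s → ({r, star r} : Set α) ≠ {s, star s} → star r ∉ P) ∧
        (∀ s ∈ P, ∀ t ∈ P, star (s ⊔ t) ∉ P)) :
    ∃ N ⊆ S,
      -- `N` is nested ...
      (∀ r ∈ N, ∀ s ∈ N,
        ∃ r' ∈ ({r, star r} : Set α), ∃ s' ∈ ({s, star s} : Set α), r' ≤ s') ∧
      -- ... and distinguishes `Profs`:
      ∀ P₁ ∈ Profs, ∀ P₂ ∈ Profs, P₁ ≠ P₂ →
        ∃ s ∈ N, (s ∈ P₁ ∧ star s ∈ P₂) ∨ (s ∈ P₂ ∧ star s ∈ P₁) := by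
  classical
  have hPall : ∀ R ∈ Profs, TreeOfTanglesAux.IsProf star S R := fun R hR =>
    ⟨(hprof R hR).1, (hprof R hR).2.1, (hprof R hR).2.2.1, (hprof R hR).2.2.2⟩
  obtain ⟨N, hNS, hNest, hdist⟩ :=
    TreeOfTanglesAux.build hinv hanti hSstar hsub Profs hfin hPall
      (TreeOfTanglesAux.badPairs star hfin.toFinset (∅ : Finset α)).card (∅ : Finset α)
      (by simp) (fun u hu => absurd hu (Finset.notMem_empty u)) le_rfl
  refine ⟨↑N, hNS, ?_, ?_⟩
  · intro r hr s hs
    exact hNest r (Finset.mem_coe.mp hr) s (Finset.mem_coe.mp hs)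
  · intro P₁ h₁ P₂ h₂ hne
    obtain ⟨u, hu, hd⟩ := hdist P₁ h₁ P₂ h₂ hne
    exact ⟨u, Finset.mem_coe.mpr hu, hd⟩
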